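/- Let n ≥ 1 and let 0 < p_1 ≤ p_2 ≤ … ≤ p_n be reals, with the convention p_0 = 0. Then ∑_{i=1}^n (p_i − p_{i−1})/p_i ≤ 1 + ln(p_n/p_1). -/

import Mathlib

/-- The telescoping-ratio sum is bounded by 1 + ln(pₙ/p₁). -/
theorem stmt11 (n : ℕ) (hn : 1 ≤ n) (p : ℕ → ℝ) (hp0 : p 0 = 0)
    (hppos : ∀ i, 1 ≤ i → i ≤ n → 0 < p i)
    (hpmono : ∀ i, 1 ≤ i → i < n → p i ≤ p (i+1)) :
    ∑ i ∈ Finset.Icc 1 n, (p i - p (i-1)) / p i ≤ 1 + Real.log (p n / p 1) := by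
  induction n with
  | zero => omega
  | succ n ih =>
    rcases Nat.eq_or_lt_of_le hn with h1 | h1
    · simp only [← h1]
      have h1p : (0:ℝ) < p 1 := hppos 1 le_rfl (by omega)
      rw [Finset.Icc_self, Finset.sum_singleton, div_self h1p.ne', Real.log_one,
        show (1:ℕ)-1=0 from rfl, hp0, sub_zero, div_self h1p.ne']
      norm_num
    · have hn1 : 1 ≤ n := by omega
      have hpn : (0:ℝ) < p n := hppos n hn1 (by omega)
      have hpn1 : (0:ℝ) < p (n+1) := hppos (n+1) (by omega) le_rfl
      have hp1 : (0:ℝ) < p 1 := hppos 1 le_rfl (by omega)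
      have hstep : p n ≤ p (n+1) := hpmono n hn1 (by omega)
      have ihh : ∑ i ∈ Finset.Icc 1 n, (p i - p (i-1)) / p i ≤
          1 + Real.log (p n / p 1) := by
        apply ih hn1 (fun i hi hin => hppos i hi (by omega))
          (fun i hi hin => hpmono i hi (by omega))
      rw [show n + 1 = n + 1 from rfl, Finset.sum_Icc_succ_top (by omega)]
      have hterm : (p (n+1) - p (n+1-1)) / p (n+1) ≤
          Real.log (p (n+1)) - Real.log (p n) := by
        simp only [Nat.add_sub_cancel]
        have hle : Real.log (p n / p (n+1)) ≤ p n / p (n+1) - 1 :=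
          Real.log_le_sub_one_of_pos (by positivity)
        rw [Real.log_div hpn.ne' hpn1.ne'] at hle
        have : p n / p (n+1) = 1 - (p (n+1) - p n) / p (n+1) := by
          field_simp
          ring
        linarith [this ▸ hle]
      have hlogs : Real.log (p n / p 1) + (Real.log (p (n+1)) - Real.log (p n))
          = Real.log (p (n+1) / p 1) := by
        rw [Real.log_div hpn.ne' hp1.ne', Real.log_div hpn1.ne' hp1.ne']
        ring
      linarith
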